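/- Assume n ≥ k + 2. For every subset J ⊆ {1, …, n} with |J| = k + 2, the subspace D_J has codimension 2 in ℂ^n, and the (k+1)-element subsets K of {1, …, n} with D_J ⊆ D_K are exactly the k + 2 subsets K ⊆ J of cardinality k + 1. Consequently the discriminantal arrangement B(n, k) has exactly C(n, k+2) codimension-2 strata of multiplicity k + 2. -/

import Mathlib

open Module Submodule

/-- The subspace `D_J ⊆ ℂ^ι` of translation vectors `x` for which the translated
hyperplanes `{l i = x i}`, `i ∈ J`, have a common point. -/
noncomputable def DD {ι V : Type*} [AddCommGroup V] [Module ℂ V]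
    (l : ι → Module.Dual ℂ V) (J : Finset ι) : Submodule ℂ (ι → ℂ) where
  carrier := {x | ∃ y : V, ∀ i ∈ J, x i = l i y}
  add_mem' := by
    rintro a b ⟨y, hy⟩ ⟨z, hz⟩
    exact ⟨y + z, fun i hi => by simp [hy i hi, hz i hi]⟩
  zero_mem' := ⟨0, fun i _ => by simp⟩
  smul_mem' := by
    rintro c a ⟨y, hy⟩
    exact ⟨c • y, fun i hi => by simp [hy i hi]⟩

variable {k n : ℕ}

lemma mem_DD_iff {l : Fin n → Module.Dual ℂ (Fin k → ℂ)} {J : Finset (Fin n)} {x : Fin n → ℂ} :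
    x ∈ DD l J ↔ ∃ y, ∀ i ∈ J, x i = l i y := Iff.rfl

lemma DD_anti (l : Fin n → Module.Dual ℂ (Fin k → ℂ)) {K J : Finset (Fin n)} (h : K ⊆ J) :
    DD l J ≤ DD l K := by
  rintro x ⟨y, hy⟩
  exact ⟨y, fun i hi => hy i (h hi)⟩

/-- Lemma A : a vector killed by `l i` for `i` in a set of size `≥ k` is zero. -/
lemma auxA (l : Fin n → Module.Dual ℂ (Fin k → ℂ))
    (hgen : ∀ S : Finset (Fin n), S.card = k → LinearIndependent ℂ (fun i : S => l i.1))
    (hk : 0 < k) {S : Finset (Fin n)} (hS : k ≤ S.card)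
    {y : Fin k → ℂ} (hy : ∀ i ∈ S, l i y = 0) : y = 0 := by
  obtain ⟨S', hsub, hcard⟩ := Finset.exists_subset_card_eq hS
  have hind := hgen S' hcard
  haveI : Nonempty {x // x ∈ S'} := by
    rw [Finset.nonempty_coe_sort]
    exact Finset.card_pos.mp (by omega)
  have hspan : Submodule.span ℂ (Set.range fun i : S' => l i.1) = ⊤ := by
    refine hind.span_eq_top_of_card_eq_finrank ?_
    rw [Fintype.card_coe, hcard, Subspace.dual_finrank_eq, Module.finrank_fin_fun]
  rw [← Module.forall_dual_apply_eq_zero_iff ℂ y]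
  intro φ
  have hφ : φ ∈ Submodule.span ℂ (Set.range fun i : S' => l i.1) := hspan ▸ Submodule.mem_top
  induction hφ using Submodule.span_induction with
  | mem x hx => obtain ⟨i, rfl⟩ := hx; exact hy i.1 (hsub i.2)
  | zero => rfl
  | add x z hx hz ihx ihz => simp [LinearMap.add_apply, ihx, ihz]
  | smul a x hx ih => simp [LinearMap.smul_apply, ih]

/-- finrank of DD. -/
lemma finrank_DD (l : Fin n → Module.Dual ℂ (Fin k → ℂ))
    (hgen : ∀ S : Finset (Fin n), S.card = k → LinearIndependent ℂ (fun i : S => l i.1))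
    (hk : 0 < k) {J : Finset (Fin n)} (hJ : k ≤ J.card) :
    finrank ℂ (DD l J) = k + (n - J.card) := by
  classical
  let Φ : ((Fin k → ℂ) × (↥(Jᶜ) → ℂ)) →ₗ[ℂ] (Fin n → ℂ) :=
    { toFun := fun p i => if h : i ∈ J then l i p.1 else p.2 ⟨i, Finset.mem_compl.2 h⟩
      map_add' := by intro p q; funext i; by_cases h : i ∈ J <;> simp [h]
      map_smul' := by intro c p; funext i; by_cases h : i ∈ J <;> simp [h] }
  have hΦ : ∀ (p) (i : Fin n), Φ p i = if h : i ∈ J then l i p.1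
      else p.2 ⟨i, Finset.mem_compl.2 h⟩ := fun p i => rfl
  have hrange : LinearMap.range Φ = DD l J := by
    ext x
    constructor
    · rintro ⟨p, rfl⟩
      exact ⟨p.1, fun i hi => by rw [hΦ, dif_pos hi]⟩
    · rintro ⟨y, hy⟩
      refine ⟨(y, fun i => x i.1), ?_⟩
      funext i
      rw [hΦ]
      by_cases h : i ∈ J
      · rw [dif_pos h]; exact (hy i h).symm
      · rw [dif_neg h]
  have hinj : Function.Injective Φ := by
    rw [← LinearMap.ker_eq_bot, LinearMap.ker_eq_bot']
    intro p hp
    have h1 : p.1 = 0 := by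
      refine auxA l hgen hk hJ (fun i hi => ?_)
      have := congrFun hp i
      rwa [hΦ, dif_pos hi] at this
    have h2 : p.2 = 0 := by
      funext i
      have := congrFun hp i.1
      rwa [hΦ, dif_neg (Finset.mem_compl.1 i.2)] at this
    exact Prod.ext h1 h2
  rw [← hrange, LinearMap.finrank_range_of_inj hinj, Module.finrank_prod,
    Module.finrank_fin_fun, Module.finrank_pi, Fintype.card_coe, Finset.card_compl,
    Fintype.card_fin]

/-- The coefficient functional `x ↦ ∑ i, c i * x i`. -/
noncomputable def FF (c : Fin n → ℂ) : (Fin n → ℂ) →ₗ[ℂ] ℂ :=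
  ∑ i, c i • (LinearMap.proj i)

lemma FF_apply (c : Fin n → ℂ) (x : Fin n → ℂ) : FF c x = ∑ i, c i * x i := by
  simp [FF]

lemma FF_single (c : Fin n → ℂ) (j : Fin n) (a : ℂ) : FF c (Pi.single j a) = c j * a := by
  classical
  rw [FF_apply]
  rw [Finset.sum_eq_single j]
  · simp
  · intro b _ hb
    simp [Pi.single_apply, hb.symm]
  · simp

/-- Lemma C: existence of a relation supported exactly on a `(k+1)`-set. -/
lemma relC (l : Fin n → Module.Dual ℂ (Fin k → ℂ))
    (hgen : ∀ S : Finset (Fin n), S.card = k → LinearIndependent ℂ (fun i : S => l i.1))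
    {K : Finset (Fin n)} (hK : K.card = k + 1) :
    ∃ c : Fin n → ℂ, (∀ i, i ∈ K ↔ c i ≠ 0) ∧ ∑ i ∈ K, c i • l i = 0 := by
  classical
  have hnli : ¬ LinearIndependent ℂ (fun i : K => l i.1) := by
    intro h
    have := h.fintype_card_le_finrank
    rw [Fintype.card_coe, hK, Subspace.dual_finrank_eq, Module.finrank_fin_fun] at this
    omega
  obtain ⟨g, hg0, i0, hi0⟩ := Fintype.not_linearIndependent_iff.mp hnli
  set c : Fin n → ℂ := fun i => if h : i ∈ K then g ⟨i, h⟩ else 0 with hc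
  have hsum : ∑ i ∈ K, c i • l i = 0 := by
    rw [← Finset.sum_attach K (fun i => c i • l i), ← hg0]
    refine Finset.sum_congr rfl (fun i _ => ?_)
    simp [hc, i.2]
  have hall : ∀ i (h : i ∈ K), c i ≠ 0 := by
    intro j hj hj0
    have hcard : (K.erase j).card = k := by rw [Finset.card_erase_of_mem hj, hK]; omega
    have hind := hgen (K.erase j) hcard
    have hzero : ∀ i (h : i ∈ K.erase j), c i = 0 := by
      have hrel : ∑ i ∈ K.erase j, c i • l i = 0 := by
        have := Finset.sum_erase_add K (fun i => c i • l i) hj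
        simp only [hj0, zero_smul, add_zero] at this
        rw [this, hsum]
      rw [← Finset.sum_attach (K.erase j) (fun i => c i • l i)] at hrel
      intro i hi
      exact Fintype.linearIndependent_iff.mp hind (fun i => c i.1) hrel ⟨i, hi⟩
    have : c i0.1 = 0 := by
      by_cases h : i0.1 = j
      · rw [h]; exact hj0
      · exact hzero i0.1 (Finset.mem_erase.2 ⟨h, i0.2⟩)
    apply hi0
    have : g i0 = c i0.1 := by simp [hc, i0.2]
    rw [this]; assumption
  refine ⟨c, fun i => ⟨fun h => hall i h, fun h => ?_⟩, hsum⟩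
  by_contra hi
  exact h (by simp [hc, hi])

/-- `DD K ≤ ker (FF c)` for a relation `c` supported in `K`. -/
lemma DD_le_ker (l : Fin n → Module.Dual ℂ (Fin k → ℂ)) {K : Finset (Fin n)} {c : Fin n → ℂ}
    (hsupp : ∀ i, i ∈ K ↔ c i ≠ 0) (hrel : ∑ i ∈ K, c i • l i = 0) :
    DD l K ≤ LinearMap.ker (FF c) := by
  rintro x ⟨y, hy⟩
  rw [LinearMap.mem_ker, FF_apply]
  have h1 : ∑ i, c i * x i = ∑ i ∈ K, c i * x i := by
    refine (Finset.sum_subset (Finset.subset_univ K) ?_).symm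
    intro i _ hi
    have : c i = 0 := by by_contra h; exact hi ((hsupp i).2 h)
    simp [this]
  rw [h1]
  have h2 : ∑ i ∈ K, c i * x i = (∑ i ∈ K, c i • l i) y := by
    rw [LinearMap.sum_apply]
    exact Finset.sum_congr rfl (fun i hi => by rw [hy i hi]; simp)
  rw [h2, hrel]; rfl

/-- `Pi.single i 1 ∉ DD l K` when `i ∈ K`, `K.card = k+1`. -/
lemma single_not_mem_DD (l : Fin n → Module.Dual ℂ (Fin k → ℂ))
    (hgen : ∀ S : Finset (Fin n), S.card = k → LinearIndependent ℂ (fun i : S => l i.1))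
    (hk : 0 < k) {K : Finset (Fin n)} (hK : K.card = k + 1) {i : Fin n} (hi : i ∈ K) :
    Pi.single i 1 ∉ DD l K := by
  classical
  rintro ⟨y, hy⟩
  have hy0 : y = 0 := by
    refine auxA l hgen hk (S := K.erase i) (by rw [Finset.card_erase_of_mem hi, hK]; omega) ?_
    intro j hj
    have h1 := hy j (Finset.mem_of_mem_erase hj)
    rw [Pi.single_apply, if_neg (Finset.ne_of_mem_erase hj)] at h1
    exact h1.symm
  have := hy i hi
  rw [hy0, Pi.single_apply, if_pos rfl] at this
  simp at this

/-- Merging: if the intersection has at least `k` elements. -/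
lemma DD_inf_le (l : Fin n → Module.Dual ℂ (Fin k → ℂ))
    (hgen : ∀ S : Finset (Fin n), S.card = k → LinearIndependent ℂ (fun i : S => l i.1))
    (hk : 0 < k) {K1 K2 : Finset (Fin n)} (hint : k ≤ (K1 ∩ K2).card) :
    DD l K1 ⊓ DD l K2 ≤ DD l (K1 ∪ K2) := by
  rintro x ⟨⟨y1, h1⟩, ⟨y2, h2⟩⟩
  have hy : y1 = y2 := by
    have : y1 - y2 = 0 := by
      refine auxA l hgen hk hint ?_
      intro i hi
      have hi1 := Finset.mem_inter.1 hi
      rw [map_sub, ← h1 i hi1.1, ← h2 i hi1.2, sub_self]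
    exact sub_eq_zero.mp this
  exact ⟨y1, fun i hi => by
    rcases Finset.mem_union.1 hi with h | h
    · exact h1 i h
    · rw [hy]; exact h2 i h⟩

lemma part1 (l : Fin n → Module.Dual ℂ (Fin k → ℂ))
    (hgen : ∀ S : Finset (Fin n), S.card = k → LinearIndependent ℂ (fun i : S => l i.1))
    (hk : 0 < k) (hkn : k + 2 ≤ n) {J : Finset (Fin n)} (hJ : J.card = k + 2) :
    finrank ℂ (DD l J) = n - 2 ∧
      {K : Finset (Fin n) | K.card = k + 1 ∧ DD l J ≤ DD l K} =
        {K : Finset (Fin n) | K ⊆ J ∧ K.card = k + 1} := by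
  constructor
  · rw [finrank_DD l hgen hk (by omega : k ≤ J.card), hJ]
    omega
  · ext K
    simp only [Set.mem_setOf_eq]
    constructor
    · rintro ⟨hc, hle⟩
      refine ⟨fun i hiK => ?_, hc⟩
      by_contra hiJ
      have h1 : Pi.single i 1 ∈ DD l J := by
        refine ⟨0, fun j hj => ?_⟩
        rw [Pi.single_apply, if_neg (by rintro rfl; exact hiJ hj)]
        simp
      exact single_not_mem_DD l hgen hk hc hiK (hle h1)
    · rintro ⟨hsub, hc⟩
      exact ⟨hc, DD_anti l hsub⟩

lemma DD_eq_iInf (l : Fin n → Module.Dual ℂ (Fin k → ℂ))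
    (hgen : ∀ S : Finset (Fin n), S.card = k → LinearIndependent ℂ (fun i : S => l i.1))
    (hk : 0 < k) {J : Finset (Fin n)} (hJ : J.card = k + 2) :
    DD l J = ⨅ K ∈ J.powersetCard (k + 1), DD l K := by
  classical
  refine le_antisymm (le_iInf₂ fun K hK => DD_anti l (Finset.mem_powersetCard.1 hK).1) ?_
  obtain ⟨a, ha⟩ := Finset.card_pos.mp (by omega : 0 < J.card)
  obtain ⟨b, hb, hba⟩ := Finset.exists_mem_ne (by omega : 1 < J.card) a
  have hmem : ∀ c ∈ J, J.erase c ∈ J.powersetCard (k + 1) :=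
    fun c hc => Finset.mem_powersetCard.2 ⟨Finset.erase_subset _ _,
      by rw [Finset.card_erase_of_mem hc, hJ]; omega⟩
  intro x hx
  have hle : ∀ c ∈ J, (⨅ K ∈ J.powersetCard (k + 1), DD l K) ≤ DD l (J.erase c) :=
    fun c hc => iInf_le_of_le (J.erase c) (iInf_le _ (hmem c hc))
  have hxa : x ∈ DD l (J.erase a) := hle a ha hx
  have hxb : x ∈ DD l (J.erase b) := hle b hb hx
  have hint : k ≤ ((J.erase a) ∩ (J.erase b)).card := by
    have h1 : (J.erase a).erase b ⊆ (J.erase a) ∩ (J.erase b) := by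
      intro j hj
      rw [Finset.mem_inter]
      refine ⟨Finset.mem_of_mem_erase hj, ?_⟩
      rw [Finset.erase_right_comm] at hj
      exact Finset.mem_of_mem_erase hj
    have h2 : ((J.erase a).erase b).card = k := by
      rw [Finset.card_erase_of_mem (Finset.mem_erase.2 ⟨hba, hb⟩),
        Finset.card_erase_of_mem ha, hJ]
      · omega
    have := Finset.card_le_card h1
    omega
  have hDD := DD_inf_le l hgen hk hint ⟨hxa, hxb⟩
  have hun : (J.erase a) ∪ (J.erase b) = J := by
    ext j
    simp only [Finset.mem_union, Finset.mem_erase]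
    constructor
    · rintro (⟨_, h⟩ | ⟨_, h⟩) <;> exact h
    · intro hj
      by_cases hja : j = a
      · exact Or.inr ⟨fun h => hba (h ▸ hja ▸ rfl), hj⟩
      · exact Or.inl ⟨hja, hj⟩
  rwa [hun] at hDD

lemma backward (l : Fin n → Module.Dual ℂ (Fin k → ℂ))
    (hgen : ∀ S : Finset (Fin n), S.card = k → LinearIndependent ℂ (fun i : S => l i.1))
    (hk : 0 < k) (hkn : k + 2 ≤ n) {P : Submodule ℂ (Fin n → ℂ)}
    (hfr : Module.finrank ℂ P = n - 2)
    (hT : Set.ncard {K : Finset (Fin n) | K.card = k + 1 ∧ P ≤ DD l K} = k + 2) :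
    ∃ J : Finset (Fin n), J.card = k + 2 ∧ P = DD l J := by
  classical
  set T := {K : Finset (Fin n) | K.card = k + 1 ∧ P ≤ DD l K} with hTdef
  have hTfin : T.Finite := Set.toFinite T
  by_cases hcase : ∃ K1 ∈ T, ∃ K2 ∈ T, K1 ≠ K2 ∧ (K1 ∩ K2).card = k
  · obtain ⟨K1, hK1, K2, hK2, hne, hint⟩ := hcase
    have hcardU : (K1 ∪ K2).card = k + 2 := by
      have := Finset.card_union_add_card_inter K1 K2
      rw [hK1.1, hK2.1, hint] at this; omega
    refine ⟨K1 ∪ K2, hcardU, ?_⟩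
    have hle : P ≤ DD l (K1 ∪ K2) :=
      le_trans (le_inf hK1.2 hK2.2) (DD_inf_le l hgen hk (le_of_eq hint.symm))
    refine Submodule.eq_of_le_of_finrank_le hle ?_
    rw [finrank_DD l hgen hk (by omega : k ≤ (K1 ∪ K2).card), hfr, hcardU]
    omega
  · exfalso
    push_neg at hcase
    obtain ⟨K1, K2, hK1, hK2, hne⟩ := (Set.one_lt_ncard_iff hTfin).1 (by omega)
    have hm : (K1 ∩ K2).card < k := by
      have h1 : (K1 ∩ K2).card ≤ k + 1 := by
        rw [← hK1.1]; exact Finset.card_le_card Finset.inter_subset_left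
      have h2 : (K1 ∩ K2).card ≠ k + 1 := by
        intro h
        have e1 : K1 ⊆ K2 := by
          rw [← Finset.inter_eq_left]
          exact Finset.eq_of_subset_of_card_le Finset.inter_subset_left (by rw [h, hK1.1])
        exact hne (Finset.eq_of_subset_of_card_le e1 (by rw [hK1.1, hK2.1]))
      have h3 := hcase K1 hK1 K2 hK2 hne
      omega
    obtain ⟨c1, hc1, hrel1⟩ := relC l hgen hK1.1
    obtain ⟨c2, hc2, hrel2⟩ := relC l hgen hK2.1
    have hns1 : ¬ K1 ⊆ K2 :=
      fun h => hne (Finset.eq_of_subset_of_card_le h (by rw [hK1.1, hK2.1]))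
    have hns2 : ¬ K2 ⊆ K1 :=
      fun h => hne (Finset.eq_of_subset_of_card_le h (by rw [hK1.1, hK2.1])).symm
    obtain ⟨i0, hi0K1, hi0K2⟩ := Finset.not_subset.1 hns1
    obtain ⟨j0, hj0K2, hj0K1⟩ := Finset.not_subset.1 hns2
    have hc1i0 : c1 i0 ≠ 0 := (hc1 i0).1 hi0K1
    have hc2j0 : c2 j0 ≠ 0 := (hc2 j0).1 hj0K2
    have hc2i0 : c2 i0 = 0 := by by_contra h; exact hi0K2 ((hc2 i0).2 h)
    have hc1j0 : c1 j0 = 0 := by by_contra h; exact hj0K1 ((hc1 j0).2 h)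
    obtain ⟨v1, v2, hF1v1, hF1v2, hF2v1, hF2v2⟩ :
        ∃ v1 v2 : Fin n → ℂ, FF c1 v1 = 1 ∧ FF c1 v2 = 0 ∧ FF c2 v1 = 0 ∧ FF c2 v2 = 1 := by
      refine ⟨(c1 i0)⁻¹ • (Pi.single i0 1 : Fin n → ℂ),
        (c2 j0)⁻¹ • (Pi.single j0 1 : Fin n → ℂ), ?_, ?_, ?_, ?_⟩ <;>
        rw [map_smul, FF_single, smul_eq_mul]
      · field_simp
      · rw [hc1j0]; ring
      · rw [hc2i0]; ring
      · field_simp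
    have hsurj : Function.Surjective ((FF c1).prod (FF c2)) := by
      rintro ⟨u, v⟩
      refine ⟨u • v1 + v • v2, ?_⟩
      simp only [LinearMap.prod_apply, Pi.prod, map_add, map_smul, hF1v1, hF1v2, hF2v1, hF2v2,
        smul_eq_mul]
      simp [hF1v1, hF1v2, hF2v1, hF2v2]
    have hfrQ : finrank ℂ ↥(LinearMap.ker (FF c1) ⊓ LinearMap.ker (FF c2)) = n - 2 := by
      have h := LinearMap.finrank_range_add_finrank_ker ((FF c1).prod (FF c2))
      rw [LinearMap.range_eq_top.2 hsurj, finrank_top, LinearMap.ker_prod,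
        Module.finrank_fin_fun, Module.finrank_prod, Module.finrank_self] at h
      omega
    have hPQ : P = LinearMap.ker (FF c1) ⊓ LinearMap.ker (FF c2) := by
      refine Submodule.eq_of_le_of_finrank_le
        (le_inf (le_trans hK1.2 (DD_le_ker l hc1 hrel1))
          (le_trans hK2.2 (DD_le_ker l hc2 hrel2))) (by rw [hfrQ, hfr])
    have hdec : ∀ g : (Fin n → ℂ) →ₗ[ℂ] ℂ, P ≤ LinearMap.ker g →
        ∀ x, g x = FF c1 x * g v1 + FF c2 x * g v2 := by
      intro g hg x
      have hxQ : x - FF c1 x • v1 - FF c2 x • v2 ∈ P := by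
        rw [hPQ, Submodule.mem_inf]
        constructor <;> rw [LinearMap.mem_ker] <;>
          simp [map_sub, map_smul, hF1v1, hF1v2, hF2v1, hF2v2]
      have h0 := hg hxQ
      rw [LinearMap.mem_ker, map_sub, map_sub, map_smul, map_smul, smul_eq_mul,
        smul_eq_mul] at h0
      linear_combination h0
    have key : ∀ K3 : Finset (Fin n), K3 ∈ T → K3 ≠ K1 → K3 ≠ K2 →
        ∃ r : ℂ, r ≠ 0 ∧ ∀ j, j ∈ K3 ↔ r * c1 j + c2 j ≠ 0 := by
      intro K3 hK3 hne1 hne2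
      obtain ⟨c3, hc3, hrel3⟩ := relC l hgen hK3.1
      have hker3 : P ≤ LinearMap.ker (FF c3) := le_trans hK3.2 (DD_le_ker l hc3 hrel3)
      have hco : ∀ j, c3 j = FF c3 v1 * c1 j + FF c3 v2 * c2 j := by
        intro j
        have h := hdec (FF c3) hker3 (Pi.single j 1)
        rw [FF_single, FF_single, FF_single] at h
        linear_combination h
      set A := FF c3 v1 with hA'
      set B := FF c3 v2 with hB'
      obtain ⟨j3, hj3⟩ := Finset.card_pos.mp (by rw [hK3.1]; omega : 0 < K3.card)
      have hA : A ≠ 0 := by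
        intro h0
        apply hne2
        have hB : B ≠ 0 := by
          intro hB0
          have := (hc3 j3).1 hj3
          rw [hco j3, h0, hB0] at this; simp at this
        ext j
        rw [hc3 j, hc2 j, hco j, h0]
        simp [hB]
      have hB : B ≠ 0 := by
        intro h0
        apply hne1
        ext j
        rw [hc3 j, hc1 j, hco j, h0]
        simp [hA]
      refine ⟨A / B, div_ne_zero hA hB, fun j => ?_⟩
      rw [hc3 j, hco j]
      have heq : A * c1 j + B * c2 j = B * (A / B * c1 j + c2 j) := by
        field_simp
      rw [heq, mul_ne_zero_iff]
      simp [hB]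
    choose r hr0 hrmem using key
    set T3 : Set (Finset (Fin n)) := T \ {K1, K2} with hT3def
    have hT3fin : T3.Finite := Set.toFinite T3
    have hT3card : hT3fin.toFinset.card = k := by
      rw [← Set.ncard_eq_toFinset_card T3 hT3fin, hT3def,
        Set.ncard_diff (by
          rw [Set.insert_subset_iff, Set.singleton_subset_iff]; exact ⟨hK1, hK2⟩) ,
        Set.ncard_pair hne, hT]
      omega
    have hmemT3 : ∀ K3 ∈ hT3fin.toFinset, K3 ∈ T ∧ K3 ≠ K1 ∧ K3 ≠ K2 := by
      intro K3 h
      rw [Set.Finite.mem_toFinset, hT3def, Set.mem_diff, Set.mem_insert_iff,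
        Set.mem_singleton_iff] at h
      exact ⟨h.1, fun e => h.2 (Or.inl e), fun e => h.2 (Or.inr e)⟩
    have hcard3 : ∀ K3 (hT3 : K3 ∈ T) (h1 : K3 ≠ K1) (h2 : K3 ≠ K2),
        ((K1 ∩ K2) \ K3).card = k + 1 - (K1 ∩ K2).card := by
      intro K3 hT3 h1 h2
      have hsub : K3 ⊆ K1 ∪ K2 := by
        intro j hj
        have h := (hrmem K3 hT3 h1 h2 j).1 hj
        rw [Finset.mem_union]
        by_contra hcon
        push_neg at hcon
        have e1 : c1 j = 0 := by by_contra hh; exact hcon.1 ((hc1 j).2 hh)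
        have e2 : c2 j = 0 := by by_contra hh; exact hcon.2 ((hc2 j).2 hh)
        rw [e1, e2] at h; simp at h
      have hsd1 : ∀ j ∈ K1, j ∉ K2 → j ∈ K3 := by
        intro j hj1 hj2
        rw [hrmem K3 hT3 h1 h2 j]
        have e2 : c2 j = 0 := by by_contra hh; exact hj2 ((hc2 j).2 hh)
        rw [e2, add_zero]
        exact mul_ne_zero (hr0 K3 hT3 h1 h2) ((hc1 j).1 hj1)
      have hsd2 : ∀ j ∈ K2, j ∉ K1 → j ∈ K3 := by
        intro j hj2 hj1
        rw [hrmem K3 hT3 h1 h2 j]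
        have e1 : c1 j = 0 := by by_contra hh; exact hj1 ((hc1 j).2 hh)
        rw [e1, mul_zero, zero_add]
        exact (hc2 j).1 hj2
      have heq : (K1 ∪ K2) \ K3 = (K1 ∩ K2) \ K3 := by
        ext j
        simp only [Finset.mem_sdiff, Finset.mem_union, Finset.mem_inter]
        constructor
        · rintro ⟨hj, hj3⟩
          rcases hj with hj1 | hj2
          · by_cases hj2 : j ∈ K2
            · exact ⟨⟨hj1, hj2⟩, hj3⟩
            · exact absurd (hsd1 j hj1 hj2) hj3
          · by_cases hj1 : j ∈ K1
            · exact ⟨⟨hj1, hj2⟩, hj3⟩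
            · exact absurd (hsd2 j hj2 hj1) hj3
        · rintro ⟨⟨hj1, _⟩, hj3⟩; exact ⟨Or.inl hj1, hj3⟩
      rw [← heq, Finset.card_sdiff_of_subset hsub]
      have hcu := Finset.card_union_add_card_inter K1 K2
      rw [hK1.1, hK2.1] at hcu
      rw [hT3.1]
      omega
    have hdisj : ∀ K3 ∈ hT3fin.toFinset, ∀ K4 ∈ hT3fin.toFinset, K3 ≠ K4 →
        Disjoint ((K1 ∩ K2) \ K3) ((K1 ∩ K2) \ K4) := by
      intro K3 h3 K4 h4 hne34
      obtain ⟨hT3, h31, h32⟩ := hmemT3 K3 h3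
      obtain ⟨hT4, h41, h42⟩ := hmemT3 K4 h4
      rw [Finset.disjoint_left]
      intro j hj3 hj4
      obtain ⟨hjint, hjn3⟩ := Finset.mem_sdiff.1 hj3
      obtain ⟨_, hjn4⟩ := Finset.mem_sdiff.1 hj4
      have e3 : r K3 hT3 h31 h32 * c1 j + c2 j = 0 := by
        by_contra hh; exact hjn3 ((hrmem K3 hT3 h31 h32 j).2 hh)
      have e4 : r K4 hT4 h41 h42 * c1 j + c2 j = 0 := by
        by_contra hh; exact hjn4 ((hrmem K4 hT4 h41 h42 j).2 hh)
      have hc1j : c1 j ≠ 0 := (hc1 j).1 (Finset.mem_inter.1 hjint).1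
      have hrr : r K3 hT3 h31 h32 = r K4 hT4 h41 h42 := by
        have hmul : (r K3 hT3 h31 h32 - r K4 hT4 h41 h42) * c1 j = 0 := by
          linear_combination e3 - e4
        rcases mul_eq_zero.1 hmul with hh | hh
        · exact sub_eq_zero.mp hh
        · exact absurd hh hc1j
      apply hne34
      ext j'
      rw [hrmem K3 hT3 h31 h32 j', hrmem K4 hT4 h41 h42 j', hrr]
    have hbi := Finset.card_biUnion hdisj
    have hsubbi : hT3fin.toFinset.biUnion (fun K3 => (K1 ∩ K2) \ K3) ⊆ K1 ∩ K2 :=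
      Finset.biUnion_subset.2 fun K3 _ => Finset.sdiff_subset
    have hlem := Finset.card_le_card hsubbi
    rw [hbi] at hlem
    have hsum : ∑ K3 ∈ hT3fin.toFinset, ((K1 ∩ K2) \ K3).card
        = k * (k + 1 - (K1 ∩ K2).card) := by
      rw [Finset.sum_congr rfl (fun K3 h => by
        obtain ⟨hT3, h31, h32⟩ := hmemT3 K3 h
        exact hcard3 K3 hT3 h31 h32), Finset.sum_const, hT3card, smul_eq_mul]
    rw [hsum] at hlem
    have h2le : 2 ≤ k + 1 - (K1 ∩ K2).card := by omega
    have hk2 : k * 2 ≤ k * (k + 1 - (K1 ∩ K2).card) := Nat.mul_le_mul_left k h2le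
    omega

/-- Theorem `proofmain` (1): for every `(k+2)`-element `J ⊆ {1,…,n}` the subspace
`D_J` has codimension 2, the hyperplanes `D_K` of `B(n,k)` containing `D_J` are exactly those
with `K ⊆ J`, `|K| = k + 1`, and consequently `B(n,k)` has exactly `C(n, k+2)` codimension-2
strata of multiplicity `k + 2`. -/
theorem stmt7 (k n : ℕ) (hk : 0 < k) (hkn : k + 2 ≤ n)
    (l : Fin n → Module.Dual ℂ (Fin k → ℂ))
    (hgen : ∀ S : Finset (Fin n), S.card = k → LinearIndependent ℂ (fun i : S => l i.1)) :
    (∀ J : Finset (Fin n), J.card = k + 2 →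
      Module.finrank ℂ ↥(DD l J) = n - 2 ∧
      {K : Finset (Fin n) | K.card = k + 1 ∧ DD l J ≤ DD l K} =
        {K : Finset (Fin n) | K ⊆ J ∧ K.card = k + 1}) ∧
    Set.ncard {P : Submodule ℂ (Fin n → ℂ) |
        (∃ S : Finset (Finset (Fin n)), S.Nonempty ∧ (∀ K ∈ S, K.card = k + 1) ∧
          P = ⨅ K ∈ S, DD l K) ∧
        Module.finrank ℂ ↥P = n - 2 ∧
        Set.ncard {K : Finset (Fin n) | K.card = k + 1 ∧ P ≤ DD l K} = k + 2} =
      Nat.choose n (k + 2) := by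
  classical
  have hpart1 : ∀ J : Finset (Fin n), J.card = k + 2 →
      Module.finrank ℂ ↥(DD l J) = n - 2 ∧
      {K : Finset (Fin n) | K.card = k + 1 ∧ DD l J ≤ DD l K} =
        {K : Finset (Fin n) | K ⊆ J ∧ K.card = k + 1} :=
    fun J hJ => part1 l hgen hk hkn hJ
  refine ⟨hpart1, ?_⟩
  have hset : {P : Submodule ℂ (Fin n → ℂ) |
        (∃ S : Finset (Finset (Fin n)), S.Nonempty ∧ (∀ K ∈ S, K.card = k + 1) ∧
          P = ⨅ K ∈ S, DD l K) ∧
        Module.finrank ℂ ↥P = n - 2 ∧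
        Set.ncard {K : Finset (Fin n) | K.card = k + 1 ∧ P ≤ DD l K} = k + 2} =
      (DD l) '' {J : Finset (Fin n) | J.card = k + 2} := by
    ext P
    simp only [Set.mem_setOf_eq, Set.mem_image]
    constructor
    · rintro ⟨_, hfr, hT⟩
      obtain ⟨J, hJ, hPJ⟩ := backward l hgen hk hkn hfr hT
      exact ⟨J, hJ, hPJ.symm⟩
    · rintro ⟨J, hJ, rfl⟩
      refine ⟨⟨J.powersetCard (k + 1), Finset.powersetCard_nonempty.2 (by omega),
        fun K hK => (Finset.mem_powersetCard.1 hK).2, DD_eq_iInf l hgen hk hJ⟩,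
        (hpart1 J hJ).1, ?_⟩
      rw [(hpart1 J hJ).2]
      have hps : {K : Finset (Fin n) | K ⊆ J ∧ K.card = k + 1}
          = ↑(J.powersetCard (k + 1)) := by
        ext K; simp [Finset.mem_powersetCard]
      rw [hps, Set.ncard_coe_finset, Finset.card_powersetCard, hJ,
        Nat.choose_succ_self_right]
  rw [hset]
  have hJJ : ∀ (A B : Finset (Fin n)), A.card = k + 2 →
      ({K : Finset (Fin n) | K ⊆ A ∧ K.card = k + 1} ⊆
        {K : Finset (Fin n) | K ⊆ B ∧ K.card = k + 1}) → A ⊆ B := by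
    intro A B hA hsub j hj
    obtain ⟨j', hj', hjj⟩ := Finset.exists_mem_ne (by omega : 1 < A.card) j
    have hK : A.erase j' ⊆ B ∧ (A.erase j').card = k + 1 :=
      hsub ⟨Finset.erase_subset _ _, by rw [Finset.card_erase_of_mem hj', hA]; omega⟩
    exact hK.1 (Finset.mem_erase.2 ⟨Ne.symm hjj, hj⟩)
  have hinj : Set.InjOn (DD l) {J : Finset (Fin n) | J.card = k + 2} := by
    intro J hJ J' hJ' hDD
    have h1 := (hpart1 J hJ).2
    have h2 := (hpart1 J' hJ').2
    rw [hDD] at h1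
    have h3 : {K : Finset (Fin n) | K ⊆ J ∧ K.card = k + 1} =
        {K : Finset (Fin n) | K ⊆ J' ∧ K.card = k + 1} := h1.symm.trans h2
    exact Finset.Subset.antisymm (hJJ J J' hJ h3.le) (hJJ J' J hJ' h3.ge)
  rw [Set.ncard_image_of_injOn hinj]
  have huniv : {J : Finset (Fin n) | J.card = k + 2} =
      ↑((Finset.univ : Finset (Fin n)).powersetCard (k + 2)) := by
    ext J; simp [Finset.mem_powersetCard]
  rw [huniv, Set.ncard_coe_finset, Finset.card_powersetCard, Finset.card_univ,
    Fintype.card_fin]
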